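/- Fix a constant c > 0. For each integer k ≥ 2 with k − ⌈√(c·k·log k)⌉ ≥ 1, set r = k − ⌈√(c·k·log k)⌉ and let p_k = 2^{−(r+k−1)}·Σ_{m=0}^{k−1} C(r+k−1, m) be the probability that a Binomial(r+k−1, 1/2) random variable is at most k−1. Then 1 − p_k = Θ(k^{−c/4}/√(log k)); that is, there exist constants 0 < A ≤ B and an integer k_0 such that for all k ≥ k_0, A·k^{−c/4}/√(log k) ≤ 1 − p_k ≤ B·k^{−c/4}/√(log k). Here log denotes the natural logarithm. -/

import Mathlib

open Finset Real Filter Topology Asymptotics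
set_option maxHeartbeats 1000000


lemma mono_helper {f f' : ℝ → ℝ} {x : ℝ} (hx : 0 ≤ x)
    (hd : ∀ y ∈ Set.Icc (0:ℝ) x, HasDerivAt f (f' y) y)
    (hpos : ∀ y ∈ Set.Ioo (0:ℝ) x, 0 ≤ f' y) : f 0 ≤ f x := by
  rcases eq_or_lt_of_le hx with h | h
  · rw [← h]
  · have mono : MonotoneOn f (Set.Icc 0 x) := by
      apply monotoneOn_of_deriv_nonneg (convex_Icc 0 x)
      · exact fun y hy => (hd y hy).continuousAt.continuousWithinAt
      · intro y hy
        rw [interior_Icc] at hy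
        exact (hd y (Set.Ioo_subset_Icc_self hy)).differentiableAt.differentiableWithinAt
      · intro y hy
        rw [interior_Icc] at hy
        rw [(hd y (Set.Ioo_subset_Icc_self hy)).deriv]
        exact hpos y hy
    exact mono (Set.left_mem_Icc.2 hx) (Set.right_mem_Icc.2 hx) hx

lemma le_log_one_add {x : ℝ} (hx : 0 ≤ x) : x - x^2/2 ≤ Real.log (1+x) := by
  have := mono_helper (f := fun t => Real.log (1+t) - (t - t^2/2))
      (f' := fun y => 1/(1+y) - (1 - y)) hx ?_ ?_
  · simpa using this
  · intro y hy
    obtain ⟨hy0, _⟩ := hy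
    have h1 : HasDerivAt (fun t : ℝ => 1 + t) 1 y := (hasDerivAt_id y).const_add 1
    have h2 : HasDerivAt (fun t : ℝ => Real.log (1+t)) (1/(1+y)) y := by
      simpa using h1.log (by positivity)
    have h3 : HasDerivAt (fun t : ℝ => t - t^2/2) (1 - y) y := by
      have := ((hasDerivAt_pow 2 y).div_const 2)
      norm_num at this
      exact (hasDerivAt_id' y).sub this
    exact h2.sub h3
  · intro y hy
    obtain ⟨hy0, _⟩ := hy
    have h1 : (0:ℝ) < 1 + y := by linarith
    rw [sub_nonneg, le_div_iff₀ h1]; nlinarith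

lemma log_one_add_le {x : ℝ} (hx : 0 ≤ x) : Real.log (1+x) ≤ x - x^2/2 + x^3/3 := by
  have := mono_helper (f := fun t => (t - t^2/2 + t^3/3) - Real.log (1+t))
      (f' := fun y => (1 - y + y^2) - 1/(1+y)) hx ?_ ?_
  · simpa using this
  · intro y hy
    obtain ⟨hy0, _⟩ := hy
    have h1 : HasDerivAt (fun t : ℝ => 1 + t) 1 y := (hasDerivAt_id y).const_add 1
    have h2 : HasDerivAt (fun t : ℝ => Real.log (1+t)) (1/(1+y)) y := by
      simpa using h1.log (by positivity)
    have h3 : HasDerivAt (fun t : ℝ => t - t^2/2 + t^3/3) (1 - y + y^2) y := by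
      have p2 := ((hasDerivAt_pow 2 y).div_const 2)
      have p3 := ((hasDerivAt_pow 3 y).div_const 3)
      norm_num at p2 p3
      have := ((hasDerivAt_id' y).sub p2).add p3
      exact this
    exact h3.sub h2
  · intro y hy
    obtain ⟨hy0, _⟩ := hy
    have h1 : (0:ℝ) < 1 + y := by linarith
    rw [sub_nonneg, div_le_iff₀ h1]; nlinarith

lemma log_one_sub_le {x : ℝ} (hx : 0 ≤ x) (hx1 : x < 1) : Real.log (1-x) ≤ -x - x^2/2 := by
  have := mono_helper (f := fun t => (-t - t^2/2) - Real.log (1-t))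
      (f' := fun y => (-1 - y) - (-1/(1-y))) hx ?_ ?_
  · simpa using this
  · intro y hy
    obtain ⟨hy0, hyx⟩ := hy
    have hne : (1:ℝ) - y > 0 := by linarith
    have h1 : HasDerivAt (fun t : ℝ => 1 - t) (-1) y := by
      simpa using (hasDerivAt_id y).const_sub 1
    have h2 : HasDerivAt (fun t : ℝ => Real.log (1-t)) (-1/(1-y)) y := by
      have := h1.log (by positivity)
      simpa [neg_div] using this
    have h3 : HasDerivAt (fun t : ℝ => -t - t^2/2) (-1 - y) y := by
      have p2 := ((hasDerivAt_pow 2 y).div_const 2)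
      norm_num at p2
      exact ((hasDerivAt_id' y).neg).sub p2
    exact h3.sub h2
  · intro y hy
    obtain ⟨hy0, hyx⟩ := hy
    have h1 : (0:ℝ) < 1 - y := by linarith
    have : -1/(1-y) ≤ -1 - y := by
      rw [div_le_iff₀ h1]; nlinarith
    linarith

lemma le_log_one_sub {x : ℝ} (hx : 0 ≤ x) (hx1 : x ≤ 1/2) :
    -x - x^2/2 - x^3 ≤ Real.log (1-x) := by
  have := mono_helper (f := fun t => Real.log (1-t) - (-t - t^2/2 - t^3))
      (f' := fun y => (-1/(1-y)) - (-1 - y - 3*y^2)) hx ?_ ?_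
  · simpa using this
  · intro y hy
    obtain ⟨hy0, hyx⟩ := hy
    have hne : (1:ℝ) - y > 0 := by linarith
    have h1 : HasDerivAt (fun t : ℝ => 1 - t) (-1) y := by
      simpa using (hasDerivAt_id y).const_sub 1
    have h2 : HasDerivAt (fun t : ℝ => Real.log (1-t)) (-1/(1-y)) y := by
      have := h1.log (by positivity)
      simpa [neg_div] using this
    have h3 : HasDerivAt (fun t : ℝ => -t - t^2/2 - t^3) (-1 - y - 3*y^2) y := by
      have p2 := ((hasDerivAt_pow 2 y).div_const 2)
      have p3 := (hasDerivAt_pow 3 y)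
      norm_num at p2 p3
      have := (((hasDerivAt_id' y).neg).sub p2).sub p3
      exact this
    exact h2.sub h3
  · intro y hy
    obtain ⟨hy0, hyx⟩ := hy
    have h1 : (0:ℝ) < 1 - y := by linarith
    have hy2 : y ≤ 1/2 := by linarith
    rw [sub_nonneg, le_div_iff₀ h1]
    nlinarith


lemma sqrt_pi_le_stirlingSeq {n : ℕ} (hn : 1 ≤ n) : Real.sqrt π ≤ Stirling.stirlingSeq n := by
  obtain ⟨m, rfl⟩ := Nat.exists_eq_add_of_le hn
  have h := Stirling.stirlingSeq'_antitone
  have ht : Tendsto (Stirling.stirlingSeq ∘ Nat.succ) atTop (𝓝 (Real.sqrt π)) :=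
    (Filter.tendsto_add_atTop_iff_nat 1).mpr Stirling.tendsto_stirlingSeq_sqrt_pi |>.congr (by
      intro n; rfl)
  have := h.le_of_tendsto ht m
  simpa [Nat.succ_eq_add_one, Nat.add_comm] using this

lemma stirlingSeq_le {n : ℕ} (hn : 1 ≤ n) : Stirling.stirlingSeq n ≤ Real.exp 1 / Real.sqrt 2 := by
  obtain ⟨m, rfl⟩ := Nat.exists_eq_add_of_le hn
  have h := Stirling.stirlingSeq'_antitone (Nat.zero_le m)
  simpa [Stirling.stirlingSeq_one, Nat.succ_eq_add_one, Nat.add_comm] using h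

lemma factorial_lower {n : ℕ} (hn : 1 ≤ n) :
    Real.sqrt π * (Real.sqrt (2*n) * ((n:ℝ)/Real.exp 1)^n) ≤ (n.factorial : ℝ) := by
  have hpos : 0 < Real.sqrt (2*n) * ((n:ℝ)/Real.exp 1)^n := by
    have : (0:ℝ) < n := by exact_mod_cast hn
    positivity
  have := sqrt_pi_le_stirlingSeq hn
  rw [Stirling.stirlingSeq, le_div_iff₀ hpos] at this
  linarith

lemma factorial_upper {n : ℕ} (hn : 1 ≤ n) :
    (n.factorial : ℝ) ≤ (Real.exp 1 / Real.sqrt 2) * (Real.sqrt (2*n) * ((n:ℝ)/Real.exp 1)^n) := by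
  have hpos : 0 < Real.sqrt (2*n) * ((n:ℝ)/Real.exp 1)^n := by
    have : (0:ℝ) < n := by exact_mod_cast hn
    positivity
  have := stirlingSeq_le hn
  rw [Stirling.stirlingSeq, div_le_iff₀ hpos] at this
  linarith

/-- Two-sided bound for `C(a+b, a) / 2^(a+b)`. -/
lemma central_bound (a b : ℕ) (ha : 1 ≤ a) (hb : 1 ≤ b) (hba : b ≤ a)
    (hx2 : ((a:ℝ)-b)/(a+b) ≤ 1/2) :
    2*Real.sqrt π/Real.exp 2 * Real.sqrt ((a+b:ℝ)/(2*a*b)) *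
        Real.exp (-((a+b:ℝ)*(((a:ℝ)-b)/(a+b))^2/2) - (a+b:ℝ)*(((a:ℝ)-b)/(a+b))^3)
      ≤ (((a+b).choose a : ℝ))/2^(a+b) ∧
    (((a+b).choose a : ℝ))/2^(a+b) ≤ Real.exp 1 / Real.sqrt 2 / π * Real.sqrt ((a+b:ℝ)/(2*a*b)) *
        Real.exp (-((a+b:ℝ)*(((a:ℝ)-b)/(a+b))^2/2) + (a+b:ℝ)*(((a:ℝ)-b)/(a+b))^3) := by
  have han : (1:ℕ) ≤ a + b := le_trans ha (Nat.le_add_right a b)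
  have haR : (0:ℝ) < a := by exact_mod_cast ha
  have hbR : (0:ℝ) < b := by exact_mod_cast hb
  have hnR : (0:ℝ) < ((a+b : ℕ) : ℝ) := by exact_mod_cast han
  have hnab : (((a+b:ℕ)):ℝ) = (a:ℝ) + b := by push_cast; ring
  set N : ℕ := a + b with hNdef
  set x : ℝ := ((a:ℝ)-b)/((a:ℝ)+b) with hxdef
  have hx0 : 0 ≤ x := by
    apply div_nonneg _ (by positivity)
    simp only [sub_nonneg]; exact_mod_cast hba
  have hx2' : x ≤ 1/2 := hx2
  have hx1 : x < 1 := lt_of_le_of_lt hx2' (by norm_num)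
  have hxn : (a:ℝ) - b = ((a:ℝ)+b) * x := by rw [hxdef]; field_simp
  have h1px : 1 + x = 2*a/((a:ℝ)+b) := by rw [hxdef]; field_simp; ring
  have h1mx : 1 - x = 2*b/((a:ℝ)+b) := by rw [hxdef]; field_simp; ring
  have h1px0 : (0:ℝ) < 1 + x := by rw [h1px]; positivity
  have h1mx0 : (0:ℝ) < 1 - x := by rw [h1mx]; positivity
  set S : ℝ := a * Real.log (1+x) + b * Real.log (1-x) with hS
  have hSub : S ≤ ((a:ℝ)+b)*x^2/2 + ((a:ℝ)+b)*x^3 := by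
    have l1 := log_one_add_le hx0
    have l2 := log_one_sub_le hx0 hx1
    have h : S ≤ a*(x - x^2/2 + x^3/3) + b*(-x - x^2/2) :=
      add_le_add (mul_le_mul_of_nonneg_left l1 haR.le) (mul_le_mul_of_nonneg_left l2 hbR.le)
    nlinarith [pow_nonneg hx0 3, mul_nonneg hbR.le (pow_nonneg hx0 3)]
  have hSlb : ((a:ℝ)+b)*x^2/2 - ((a:ℝ)+b)*x^3 ≤ S := by
    have l1 := le_log_one_add hx0
    have l2 := le_log_one_sub hx0 hx2'
    have h : a*(x - x^2/2) + b*(-x - x^2/2 - x^3) ≤ S :=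
      add_le_add (mul_le_mul_of_nonneg_left l1 haR.le) (mul_le_mul_of_nonneg_left l2 hbR.le)
    nlinarith [mul_nonneg haR.le (pow_nonneg hx0 3)]
  have hE : ((N:ℝ)^N)/((a:ℝ)^a * (b:ℝ)^b * 2^N) = Real.exp (-S) := by
    have expn : (N:ℝ)^N = Real.exp (N * Real.log N) := by
      rw [← Real.log_pow, Real.exp_log (by positivity)]
    have expa : (a:ℝ)^a = Real.exp (a * Real.log a) := by
      rw [← Real.log_pow, Real.exp_log (by positivity)]
    have expb : (b:ℝ)^b = Real.exp (b * Real.log b) := by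
      rw [← Real.log_pow, Real.exp_log (by positivity)]
    have exp2 : (2:ℝ)^N = Real.exp (N * Real.log 2) := by
      rw [← Real.log_pow, Real.exp_log (by positivity)]
    have hla : Real.log a = Real.log N - Real.log 2 + Real.log (1+x) := by
      have hh : (a:ℝ) = (N:ℝ) * (1+x) / 2 := by rw [h1px, hnab]; field_simp
      rw [hh, Real.log_div (by positivity) (by norm_num),
        Real.log_mul (by positivity) (by positivity)]
      ring
    have hlb : Real.log b = Real.log N - Real.log 2 + Real.log (1-x) := by
      have hh : (b:ℝ) = (N:ℝ) * (1-x) / 2 := by rw [h1mx, hnab]; field_simp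
      rw [hh, Real.log_div (by positivity) (by norm_num),
        Real.log_mul (by positivity) (by positivity)]
      ring
    rw [expn, expa, expb, exp2, ← Real.exp_add, ← Real.exp_add, div_eq_iff (by positivity),
      ← Real.exp_add]
    congr 1
    rw [hla, hlb, hS, hnab]
    ring
  -- choose identity
  have hchoose : ((N.choose a : ℝ)) * (a.factorial * b.factorial) = (N.factorial : ℝ) := by
    have h := Nat.choose_mul_factorial_mul_factorial (show a ≤ N from Nat.le_add_right a b)
    have hNa : N - a = b := by omega
    rw [hNa] at h
    push_cast [← h]
    ring
  set P : ℝ := Real.sqrt (2*N) * ((N:ℝ)/Real.exp 1)^N with hP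
  set Q : ℝ := Real.sqrt (2*a) * ((a:ℝ)/Real.exp 1)^a with hQ
  set R : ℝ := Real.sqrt (2*b) * ((b:ℝ)/Real.exp 1)^b with hR
  have hPpos : 0 < P := by rw [hP]; positivity
  have hQpos : 0 < Q := by rw [hQ]; positivity
  have hRpos : 0 < R := by rw [hR]; positivity
  have hsq : Real.sqrt (2*(N:ℝ)) / (Real.sqrt (2*(a:ℝ)) * Real.sqrt (2*(b:ℝ)))
      = Real.sqrt ((N:ℝ)/(2*a*b)) := by
    rw [← Real.sqrt_mul (by positivity), ← Real.sqrt_div (by positivity)]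
    congr 1
    field_simp
  have hkey : P / (Q * R * 2^N) = Real.sqrt ((N:ℝ)/(2*a*b)) * Real.exp (-S) := by
    rw [← hE, ← hsq, hP, hQ, hR]
    have hexpN : Real.exp 1 ^ N = Real.exp 1 ^ a * Real.exp 1 ^ b := by
      rw [← pow_add]
    rw [div_pow, div_pow, div_pow, hexpN]
    have e1 : Real.exp 1 ≠ 0 := (Real.exp_pos 1).ne'
    have s1 : Real.sqrt (2*(a:ℝ)) ≠ 0 := by positivity
    have s2 : Real.sqrt (2*(b:ℝ)) ≠ 0 := by positivity
    have p1 : (a:ℝ)^a ≠ 0 := by positivity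
    have p2 : (b:ℝ)^b ≠ 0 := by positivity
    field_simp
  have htQ : (a.factorial : ℝ) ≥ Real.sqrt π * Q := factorial_lower ha
  have htR : (b.factorial : ℝ) ≥ Real.sqrt π * R := factorial_lower hb
  have htQ' : (a.factorial : ℝ) ≤ (Real.exp 1 / Real.sqrt 2) * Q := factorial_upper ha
  have htR' : (b.factorial : ℝ) ≤ (Real.exp 1 / Real.sqrt 2) * R := factorial_upper hb
  have htN : (N.factorial : ℝ) ≥ Real.sqrt π * P := factorial_lower han
  have htN' : (N.factorial : ℝ) ≤ (Real.exp 1 / Real.sqrt 2) * P := factorial_upper han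
  have hfacpos : (0:ℝ) < a.factorial * b.factorial := by positivity
  have hT : ((N.choose a : ℝ))/2^N = (N.factorial : ℝ) / (a.factorial * b.factorial * 2^N) := by
    rw [eq_div_iff (by positivity)]
    field_simp [← hchoose]
    linear_combination hchoose
  have hsqrtpi : (0:ℝ) < Real.sqrt π := Real.sqrt_pos.mpr Real.pi_pos
  have he2 : (Real.exp 1 / Real.sqrt 2) * ((Real.exp 1 / Real.sqrt 2)) = Real.exp 2 / 2 := by
    rw [div_mul_div_comm, ← Real.exp_add, Real.mul_self_sqrt (by norm_num)]
    norm_num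
  have hpipi : Real.sqrt π * Real.sqrt π = π := Real.mul_self_sqrt Real.pi_pos.le
  have hexp_mono_lb : Real.exp (-(((a:ℝ)+b)*x^2/2) - ((a:ℝ)+b)*x^3) ≤ Real.exp (-S) := by
    rw [Real.exp_le_exp]; linarith
  have hexp_mono_ub : Real.exp (-S) ≤ Real.exp (-(((a:ℝ)+b)*x^2/2) + ((a:ℝ)+b)*x^3) := by
    rw [Real.exp_le_exp]; linarith
  have hsqnn : (0:ℝ) ≤ Real.sqrt ((N:ℝ)/(2*a*b)) := Real.sqrt_nonneg _
  constructor
  · -- lower bound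
    have step1 : (Real.sqrt π * P) / ((Real.exp 1 / Real.sqrt 2) * Q * ((Real.exp 1 / Real.sqrt 2) * R) * 2^N)
        ≤ ((N.choose a : ℝ))/2^N := by
      rw [hT]
      apply div_le_div₀ (Nat.cast_nonneg _) htN (by positivity)
      have h1 : (a.factorial : ℝ) * b.factorial ≤
          ((Real.exp 1 / Real.sqrt 2) * Q) * ((Real.exp 1 / Real.sqrt 2) * R) :=
        mul_le_mul htQ' htR' (Nat.cast_nonneg _) (by positivity)
      have := mul_le_mul_of_nonneg_right h1 (show (0:ℝ) ≤ 2^N by positivity)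
      linarith
    have step2 : (Real.sqrt π * P) / ((Real.exp 1 / Real.sqrt 2) * Q * ((Real.exp 1 / Real.sqrt 2) * R) * 2^N)
        = (2*Real.sqrt π/Real.exp 2) * (P / (Q * R * 2^N)) := by
      have hden : (Real.exp 1 / Real.sqrt 2) * Q * ((Real.exp 1 / Real.sqrt 2) * R) * 2^N
          = (Real.exp 2 / 2) * (Q * R * 2^N) := by rw [← he2]; ring
      rw [hden, mul_div_mul_comm, div_div_eq_mul_div, mul_comm (Real.sqrt π) 2]
    rw [step2, hkey] at step1
    refine le_trans ?_ step1
    rw [hnab] at hsqnn ⊢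
    rw [mul_assoc, mul_assoc]
    apply mul_le_mul_of_nonneg_left _ (by positivity)
    exact mul_le_mul_of_nonneg_left hexp_mono_lb (by positivity)
  · -- upper bound
    have step1 : ((N.choose a : ℝ))/2^N ≤
        ((Real.exp 1 / Real.sqrt 2) * P) / (Real.sqrt π * Q * (Real.sqrt π * R) * 2^N) := by
      rw [hT]
      apply div_le_div₀ (by positivity) htN' (by positivity)
      have h1 : (Real.sqrt π * Q) * (Real.sqrt π * R) ≤ (a.factorial : ℝ) * b.factorial :=
        mul_le_mul htQ htR (by positivity) (Nat.cast_nonneg _)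
      have := mul_le_mul_of_nonneg_right h1 (show (0:ℝ) ≤ 2^N by positivity)
      linarith
    have step2 : ((Real.exp 1 / Real.sqrt 2) * P) / (Real.sqrt π * Q * (Real.sqrt π * R) * 2^N)
        = (Real.exp 1 / Real.sqrt 2 / π) * (P / (Q * R * 2^N)) := by
      have hden : Real.sqrt π * Q * (Real.sqrt π * R) * 2^N = π * (Q * R * 2^N) := by
        linear_combination (Q * R * 2^N) * hpipi
      rw [hden, mul_div_mul_comm]
    rw [step2, hkey] at step1
    refine le_trans step1 ?_
    rw [hnab] at hsqnn ⊢
    rw [mul_assoc, mul_assoc]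
    apply mul_le_mul_of_nonneg_left _ (by positivity)
    exact mul_le_mul_of_nonneg_left hexp_mono_ub (by positivity)


lemma choose_ratio_step (n m : ℕ) (hm : m < n) :
    (n.choose (m+1) : ℝ) = (n.choose m : ℝ) * ((n:ℝ) - m) / (m+1) := by
  have h := Nat.choose_succ_right_eq n m
  have hcast : ((n.choose (m+1)):ℝ) * ((m:ℝ)+1) = (n.choose m : ℝ) * ((n:ℝ) - (m:ℝ)) := by
    have h2 := congrArg (Nat.cast (R := ℝ)) h
    push_cast [Nat.cast_sub hm.le] at h2
    linarith
  field_simp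
  linarith

lemma tail_upper (n k : ℕ) (hk : k ≤ n) (hρ : ((n:ℝ) - k) < (k:ℝ) + 1) :
    ∑ m ∈ Finset.Ico k (n+1), (n.choose m : ℝ) ≤
      (n.choose k : ℝ) * (((k:ℝ)+1) / (((k:ℝ)+1) - ((n:ℝ)-k))) := by
  set ρ : ℝ := ((n:ℝ) - k) / ((k:ℝ) + 1) with hρdef
  have hρ0 : 0 ≤ ρ := by
    apply div_nonneg _ (by positivity)
    have : (k:ℝ) ≤ n := by exact_mod_cast hk
    linarith
  have hρ1 : ρ < 1 := by
    rw [hρdef, div_lt_one (by positivity)]; linarith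
  have hterm : ∀ j, k + j ≤ n → (n.choose (k+j) : ℝ) ≤ (n.choose k : ℝ) * ρ^j := by
    intro j
    induction j with
    | zero => intro _; simp
    | succ i ih =>
      intro hij
      have hki : k + i < n := by omega
      have h1 := choose_ratio_step n (k+i) hki
      have h2 : ((n:ℝ) - (k+i)) / ((k:ℝ)+i+1) ≤ ρ := by
        rw [hρdef, div_le_div_iff₀ (by positivity) (by positivity)]
        have hn : (k:ℝ) + i ≤ n := by exact_mod_cast hki.le
        have hi : (0:ℝ) ≤ i := Nat.cast_nonneg i
        nlinarith
      have h3 : (n.choose (k+(i+1)) : ℝ) ≤ (n.choose (k+i) : ℝ) * ρ := by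
        have : (k:ℕ) + (i+1) = (k+i)+1 := by omega
        rw [this, h1, mul_div_assoc]
        apply mul_le_mul_of_nonneg_left _ (Nat.cast_nonneg _)
        push_cast
        convert h2 using 2 <;> ring
      calc (n.choose (k+(i+1)) : ℝ) ≤ (n.choose (k+i) : ℝ) * ρ := h3
        _ ≤ (n.choose k : ℝ) * ρ^i * ρ := by
            apply mul_le_mul_of_nonneg_right (ih hki.le) hρ0
        _ = (n.choose k : ℝ) * ρ^(i+1) := by ring
  rw [Finset.sum_Ico_eq_sum_range]
  have hsum : ∑ j ∈ Finset.range (n+1-k), (n.choose (k+j) : ℝ) ≤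
      (n.choose k : ℝ) * ∑ j ∈ Finset.range (n+1-k), ρ^j := by
    rw [Finset.mul_sum]
    apply Finset.sum_le_sum
    intro j hj
    simp only [Finset.mem_range] at hj
    exact hterm j (by omega)
  refine hsum.trans ?_
  apply mul_le_mul_of_nonneg_left _ (Nat.cast_nonneg _)
  have h1ρ : (0:ℝ) < 1 - ρ := by linarith
  have hgeom : ∑ j ∈ Finset.range (n+1-k), ρ^j ≤ 1/(1-ρ) := by
    rw [geom_sum_eq hρ1.ne]
    have heq : (ρ^(n+1-k) - 1)/(ρ - 1) = (1 - ρ^(n+1-k))/(1 - ρ) := by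
      rw [← neg_div_neg_eq]; ring_nf
    rw [heq, div_le_div_iff₀ h1ρ h1ρ]
    have := pow_nonneg hρ0 (n+1-k)
    nlinarith
  refine hgeom.trans ?_
  have heq2 : 1 - ρ = (((k:ℝ)+1) - ((n:ℝ)-k))/((k:ℝ)+1) := by
    rw [hρdef]
    field_simp
  rw [heq2, one_div_div]

lemma tail_lower (n k L : ℕ) (hL : 1 ≤ L) (hkLn : k + L ≤ n) (hρ0 : 0 ≤ (n:ℝ) - k - L)
    (hρ1 : (n:ℝ) - k - L ≤ (k:ℝ) + L) :
    (n.choose k : ℝ) * (L * (((n:ℝ)-k-L)/((k:ℝ)+L))^L) ≤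
      ∑ m ∈ Finset.Ico k (n+1), (n.choose m : ℝ) := by
  set ρ : ℝ := ((n:ℝ)-k-L)/((k:ℝ)+L) with hρdef
  have hL0 : (0:ℝ) ≤ L := Nat.cast_nonneg L
  have hkL0 : (0:ℝ) < (k:ℝ) + L + 1 := by positivity
  have hLR : (1:ℝ) ≤ (L:ℝ) := by exact_mod_cast hL
  have hkL : (0:ℝ) < (k:ℝ) + L := by linarith
  have hρnn : 0 ≤ ρ := div_nonneg hρ0 hkL.le
  have hρle1 : ρ ≤ 1 := by
    rw [hρdef, div_le_one hkL]; linarith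
  have hterm : ∀ j, j ≤ L → (n.choose k : ℝ) * ρ^j ≤ (n.choose (k+j) : ℝ) := by
    intro j
    induction j with
    | zero => intro _; simp
    | succ i ih =>
      intro hij
      have hki : k + i < n := by omega
      have h1 := choose_ratio_step n (k+i) hki
      have h2 : ρ ≤ ((n:ℝ) - (k+i)) / ((k:ℝ)+i+1) := by
        rw [hρdef, div_le_div_iff₀ hkL (by positivity)]
        have hiL : (i:ℝ) + 1 ≤ L := by exact_mod_cast hij
        nlinarith
      have h3 : (n.choose (k+i) : ℝ) * ρ ≤ (n.choose (k+(i+1)) : ℝ) := by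
        have heq : (k:ℕ) + (i+1) = (k+i)+1 := by omega
        rw [heq, h1, mul_div_assoc]
        apply mul_le_mul_of_nonneg_left _ (Nat.cast_nonneg _)
        refine h2.trans (le_of_eq ?_)
        push_cast
        ring_nf
      calc (n.choose k : ℝ) * ρ^(i+1) = ((n.choose k : ℝ) * ρ^i) * ρ := by ring
        _ ≤ (n.choose (k+i) : ℝ) * ρ := mul_le_mul_of_nonneg_right (ih (by omega)) hρnn
        _ ≤ (n.choose (k+(i+1)) : ℝ) := h3
  have hsub : Finset.Ico k (k+L) ⊆ Finset.Ico k (n+1) := by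
    apply Finset.Ico_subset_Ico le_rfl
    omega
  have h1 : ∑ m ∈ Finset.Ico k (k+L), (n.choose m : ℝ) ≤
      ∑ m ∈ Finset.Ico k (n+1), (n.choose m : ℝ) :=
    Finset.sum_le_sum_of_subset_of_nonneg hsub (fun _ _ _ => Nat.cast_nonneg _)
  refine le_trans ?_ h1
  rw [Finset.sum_Ico_eq_sum_range]
  have : (k + L) - k = L := by omega
  rw [this]
  have h2 : ∀ j ∈ Finset.range L, (n.choose k : ℝ) * ρ^L ≤ (n.choose (k+j) : ℝ) := by
    intro j hj
    simp only [Finset.mem_range] at hj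
    refine le_trans ?_ (hterm j hj.le)
    apply mul_le_mul_of_nonneg_left _ (Nat.cast_nonneg _)
    exact pow_le_pow_of_le_one hρnn hρle1 hj.le
  calc (n.choose k : ℝ) * (L * ρ^L) = ∑ _j ∈ Finset.range L, (n.choose k : ℝ) * ρ^L := by
        rw [Finset.sum_const, Finset.card_range]; ring
    _ ≤ ∑ j ∈ Finset.range L, (n.choose (k+j) : ℝ) := Finset.sum_le_sum h2

lemma ev_log_le (ε : ℝ) (hε : 0 < ε) : ∀ᶠ x : ℝ in atTop, Real.log x ≤ ε * x := by
  have h := (Real.isLittleO_log_id_atTop.def hε)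
  filter_upwards [h, eventually_ge_atTop (1:ℝ)] with x hx hx1
  rw [Real.norm_eq_abs, Real.norm_eq_abs] at hx
  calc Real.log x ≤ |Real.log x| := le_abs_self _
    _ ≤ ε * |x| := hx
    _ = ε * x := by rw [abs_of_nonneg (by linarith)]

lemma ev_log_cube_le (ε : ℝ) (hε : 0 < ε) : ∀ᶠ x : ℝ in atTop, (Real.log x)^3 ≤ ε * x := by
  have h1 : Real.log =o[atTop] fun x : ℝ => x ^ ((1:ℝ)/3) :=
    isLittleO_log_rpow_atTop (by norm_num)
  have h2 : (fun x : ℝ => (Real.log x)^3) =o[atTop]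
      (fun x : ℝ => (x ^ ((1:ℝ)/3))^3) := h1.pow (n := 3) (by norm_num)
  have h3 : (fun x : ℝ => (x ^ ((1:ℝ)/3))^(3:ℕ)) =ᶠ[atTop] (fun x : ℝ => x) := by
    filter_upwards [eventually_ge_atTop (0:ℝ)] with x hx
    rw [← Real.rpow_natCast (x ^ ((1:ℝ)/3)) 3, ← Real.rpow_mul hx]
    norm_num
  have h4 : (fun x : ℝ => (Real.log x)^3) =o[atTop] (fun x : ℝ => x) := h2.congr' (by rfl) h3
  have h := h4.def hε
  filter_upwards [h, eventually_ge_atTop (1:ℝ)] with x hx hx1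
  rw [Real.norm_eq_abs, Real.norm_eq_abs] at hx
  calc (Real.log x)^3 ≤ |(Real.log x)^3| := le_abs_self _
    _ ≤ ε * |x| := hx
    _ = ε * x := by rw [abs_of_nonneg (by linarith)]

lemma ev_conditions (c : ℝ) (hc : 0 < c) :
    ∀ᶠ k : ℕ in atTop, (32 ≤ k ∧ 1 ≤ Real.log k ∧ 1 ≤ 2*c*Real.log k ∧
      2 ≤ Real.sqrt (c*k*Real.log k) ∧ Real.log k ≤ k/(256*c) ∧
      (Real.log k)^3 ≤ k/(64*c^3)) := by
  have hcast : Tendsto (Nat.cast : ℕ → ℝ) atTop atTop := tendsto_natCast_atTop_atTop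
  have hlog : Tendsto (fun k : ℕ => Real.log k) atTop atTop :=
    Real.tendsto_log_atTop.comp hcast
  have e1 : ∀ᶠ k : ℕ in atTop, 32 ≤ k := eventually_ge_atTop 32
  have e2 : ∀ᶠ k : ℕ in atTop, 1 ≤ Real.log k := hlog.eventually_ge_atTop 1
  have e3' : ∀ᶠ k : ℕ in atTop, 1/(2*c) ≤ Real.log k := hlog.eventually_ge_atTop _
  have e4' : ∀ᶠ k : ℕ in atTop, 4/c ≤ (k:ℝ) := hcast.eventually_ge_atTop _
  have e5 : ∀ᶠ k : ℕ in atTop, Real.log k ≤ k/(256*c) := by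
    have h := hcast.eventually (ev_log_le (1/(256*c)) (by positivity))
    filter_upwards [h] with k hk
    calc Real.log k ≤ (1/(256*c)) * k := hk
      _ = k/(256*c) := by ring
  have e6 : ∀ᶠ k : ℕ in atTop, (Real.log k)^3 ≤ k/(64*c^3) := by
    have h := hcast.eventually (ev_log_cube_le (1/(64*c^3)) (by positivity))
    filter_upwards [h] with k hk
    calc (Real.log k)^3 ≤ (1/(64*c^3)) * k := hk
      _ = k/(64*c^3) := by ring
  filter_upwards [e1, e2, e3', e4', e5, e6] with k h1 h2 h3 h4 h5 h6
  refine ⟨h1, h2, ?_, ?_, h5, h6⟩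
  · rw [div_le_iff₀ (by positivity)] at h3
    linarith [h3]
  · have h44 : (4:ℝ) ≤ c * k := by
      rw [div_le_iff₀ hc] at h4
      linarith
    have : (4:ℝ) ≤ c*k*Real.log k := by nlinarith
    calc (2:ℝ) = Real.sqrt 4 := by
          rw [show (4:ℝ) = 2^2 by norm_num, Real.sqrt_sq (by norm_num)]
      _ ≤ Real.sqrt (c*k*Real.log k) := Real.sqrt_le_sqrt this

lemma main_estimate (c : ℝ) (hc : 0 < c) (k : ℕ)
    (hk32 : 32 ≤ k)
    (hlk1 : 1 ≤ Real.log k)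
    (hc2 : 1 ≤ 2*c*Real.log k)
    (hq2 : 2 ≤ Real.sqrt (c * k * Real.log k))
    (hBc : Real.log k ≤ k/(256*c))
    (hAc : (Real.log k)^3 ≤ k/(64*c^3)) :
    (2*Real.sqrt π/Real.exp 2 * Real.exp (-2:ℝ) / (64 * Real.sqrt 2 * Real.sqrt c))
        * (k : ℝ) ^ (-(c / 4)) / Real.sqrt (Real.log k) ≤
      1 - (∑ m ∈ Finset.range k,
        ((k - ⌈Real.sqrt (c * k * Real.log k)⌉₊ + k - 1).choose m : ℝ)) /
          2 ^ (k - ⌈Real.sqrt (c * k * Real.log k)⌉₊ + k - 1) ∧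
    1 - (∑ m ∈ Finset.range k,
        ((k - ⌈Real.sqrt (c * k * Real.log k)⌉₊ + k - 1).choose m : ℝ)) /
          2 ^ (k - ⌈Real.sqrt (c * k * Real.log k)⌉₊ + k - 1) ≤
      (2 * Real.sqrt 2 * Real.exp 1 * (Real.exp 1 / Real.sqrt 2 / π) / Real.sqrt c)
        * (k : ℝ) ^ (-(c / 4)) / Real.sqrt (Real.log k) := by
  have hk0 : (0:ℝ) < k := by positivity
  have hk0' : (0:ℝ) < (k:ℝ) := hk0
  have hkR32 : (32:ℝ) ≤ k := by exact_mod_cast hk32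
  set q := Real.sqrt (c * k * Real.log k) with hqdef
  set s := ⌈q⌉₊ with hsdef
  set r := k - s with hrdef
  set n := r + k - 1 with hndef
  set lk := Real.log k with hlkdef
  have hq0 : 0 ≤ q := Real.sqrt_nonneg _
  have hqsq : q^2 = c*k*lk := Real.sq_sqrt (mul_nonneg (mul_nonneg hc.le hk0.le) (by linarith))
  have hsq : q ≤ s := Nat.le_ceil q
  have hs1q : (s:ℝ) ≤ q + 1 := (Nat.ceil_lt_add_one hq0).le
  -- w = sqrt(c * lk)
  have hw : q = Real.sqrt k * Real.sqrt (c*lk) := by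
    rw [hqdef, show c*(k:ℝ)*lk = (k:ℝ)*(c*lk) from by ring, Real.sqrt_mul hk0.le]
  set w := Real.sqrt (c*lk) with hwdef
  have hw0 : 0 ≤ w := Real.sqrt_nonneg _
  have hw2 : w^2 = c*lk := Real.sq_sqrt (by positivity)
  have hsk : Real.sqrt k * Real.sqrt k = (k:ℝ) := Real.mul_self_sqrt hk0.le
  have hsk0 : (0:ℝ) < Real.sqrt k := Real.sqrt_pos.mpr hk0
  have hlk0 : (0:ℝ) < lk := by linarith
  have hslk0 : (0:ℝ) < Real.sqrt lk := Real.sqrt_pos.mpr hlk0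
  have hsc0 : (0:ℝ) < Real.sqrt c := Real.sqrt_pos.mpr hc
  -- w ≤ √k/16
  have hclk : c*lk ≤ (k:ℝ)/256 := by
    have h := mul_le_mul_of_nonneg_left hBc hc.le
    have he : c*((k:ℝ)/(256*c)) = (k:ℝ)/256 := by field_simp
    linarith
  have hw16 : w ≤ Real.sqrt k / 16 := by
    have h1 : w^2 ≤ (Real.sqrt k / 16)^2 := by
      have he : (Real.sqrt k / 16)^2 = (k:ℝ)/256 := by
        rw [div_pow, sq, hsk]; norm_num
      rw [hw2, he]
      exact hclk
    exact (pow_le_pow_iff_left₀ hw0 (by positivity) two_ne_zero).mp h1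
  -- q ≤ k/16
  have hq16 : q ≤ (k:ℝ)/16 := by
    rw [hw]
    calc Real.sqrt k * w ≤ Real.sqrt k * (Real.sqrt k/16) :=
          mul_le_mul_of_nonneg_left hw16 hsk0.le
      _ = (k:ℝ)/16 := by linear_combination hsk/16
  have hq8 : q + 2 ≤ (k:ℝ)/8 := by linarith
  -- cube bound
  have hcube : (q+2)^3 ≤ (k:ℝ)^2 := by
    have h8w : 8*w^3 ≤ Real.sqrt k := by
      have h1 : (8*w^3)^2 ≤ (Real.sqrt k)^2 := by
        have : (8*w^3)^2 = 64*(w^2)^3 := by ring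
        rw [this, hw2, sq, hsk]
        have h := mul_le_mul_of_nonneg_left hAc (by positivity : (0:ℝ) ≤ 64*c^3)
        have he : (64*c^3)*((k:ℝ)/(64*c^3)) = (k:ℝ) := by field_simp
        nlinarith [h]
      exact (pow_le_pow_iff_left₀ (by positivity) hsk0.le two_ne_zero).mp h1
    have h2q : (q+2)^3 ≤ 8*q^3 := by nlinarith [hq2, hq0]
    have : 8*q^3 = (Real.sqrt k)^3 * (8*w^3) := by rw [hw]; ring
    calc (q+2)^3 ≤ 8*q^3 := h2q
      _ = (Real.sqrt k)^3 * (8*w^3) := this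
      _ ≤ (Real.sqrt k)^3 * Real.sqrt k := mul_le_mul_of_nonneg_left h8w (by positivity)
      _ = (Real.sqrt k * Real.sqrt k)^2 := by ring
      _ = (k:ℝ)^2 := by rw [hsk]
  -- s and ℕ facts
  have hs2 : 2 ≤ s := by
    have : (2:ℝ) ≤ (s:ℝ) := le_trans hq2 hsq
    exact_mod_cast this
  have hs8 : 8*s ≤ k := by
    have : ((8*s : ℕ):ℝ) ≤ (k:ℝ) := by push_cast; nlinarith
    exact_mod_cast this
  set b := k - s - 1 with hbdef
  have hnab : n = k + b := by omega
  have hb1 : 1 ≤ b := by omega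
  have hbk : b ≤ k := by omega
  have hbR : (b:ℝ) = (k:ℝ) - s - 1 := by
    have h : b + s + 1 = k := by omega
    have := congrArg (Nat.cast (R := ℝ)) h
    push_cast at this
    linarith
  have hbR2 : (k:ℝ)/2 ≤ b := by rw [hbR]; linarith
  have hbR0 : (0:ℝ) < b := by linarith
  have hnc : ((n:ℕ):ℝ) = (k:ℝ) + b := by exact_mod_cast congrArg (Nat.cast (R := ℝ)) hnab
  have hnR_eq : (k:ℝ) + b = 2*k - s - 1 := by rw [hbR]; ring
  have hnR_lb : (k:ℝ) ≤ (k:ℝ) + b := by linarith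
  have hnR_ub : (k:ℝ) + b ≤ 2*k := by linarith
  have hnR0 : (0:ℝ) < (k:ℝ) + b := by linarith
  have hxnum : (k:ℝ) - b = (s:ℝ) + 1 := by rw [hbR]; ring
  -- apply central bound
  have hx2 : ((k:ℝ)-b)/((k:ℝ)+b) ≤ 1/2 := by
    rw [hxnum, div_le_iff₀ hnR0]
    nlinarith
  have hcb := central_bound k b (by omega) hb1 hbk (by push_cast; exact hx2)
  obtain ⟨hcb_lb, hcb_ub⟩ := hcb
  -- exponent rewrites
  have hEXP1 : ((k:ℝ)+b)*(((k:ℝ)-b)/((k:ℝ)+b))^2/2 = ((s:ℝ)+1)^2/(2*((k:ℝ)+b)) := by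
    rw [hxnum]; field_simp
  have hEXP2 : ((k:ℝ)+b)*(((k:ℝ)-b)/((k:ℝ)+b))^3 = ((s:ℝ)+1)^3/((k:ℝ)+b)^2 := by
    rw [hxnum]; field_simp
  have hs1ub : (s:ℝ)+1 ≤ q+2 := by linarith
  have hcube3 : ((s:ℝ)+1)^3 ≤ (q+2)^3 := pow_le_pow_left₀ (by positivity) hs1ub 3
  have hsq2 : ((s:ℝ)+1)^2 ≤ (q+2)^2 := pow_le_pow_left₀ (by positivity) hs1ub 2
  have h2k : (0:ℝ) < 2*(k:ℝ)-s-1 := by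
    rw [← hnR_eq]; exact hnR0
  have hElb : c*lk/4 ≤ ((s:ℝ)+1)^2/(2*((k:ℝ)+b)) := by
    have h1 : c*lk/4 = q^2/(4*k) := by rw [hqsq]; field_simp
    rw [h1]
    exact div_le_div₀ (by positivity) (by nlinarith only [hsq, hq0]) (by linarith only [hnR0]) (by linarith only [hnR_ub])
  have hEub : ((s:ℝ)+1)^2/(2*((k:ℝ)+b)) ≤ c*lk/4 + 1 := by
    have e1 : ((s:ℝ)+1)^2/(2*((k:ℝ)+b)) - ((s:ℝ)+1)^2/(4*k) = ((s:ℝ)+1)^3/(4*k*((k:ℝ)+b)) := by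
      rw [hnR_eq]
      field_simp
      ring
    have e2 : ((s:ℝ)+1)^3/(4*k*((k:ℝ)+b)) ≤ 1/4 := by
      rw [div_le_iff₀ (by positivity)]
      calc ((s:ℝ)+1)^3 ≤ (q+2)^3 := hcube3
        _ ≤ (k:ℝ)^2 := hcube
        _ ≤ (k:ℝ)*((k:ℝ)+b) := by nlinarith only [hnR_lb, hk0]
        _ = 1/4*(4*k*((k:ℝ)+b)) := by ring
    have e3 : ((s:ℝ)+1)^2/(4*k) ≤ c*lk/4 + 1/2 := by
      rw [div_le_iff₀ (by positivity)]
      nlinarith only [hsq2, hqsq, hq16, hkR32]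
    linarith
  have hX3ub : ((s:ℝ)+1)^3/((k:ℝ)+b)^2 ≤ 1 := by
    rw [div_le_one (by positivity)]
    calc ((s:ℝ)+1)^3 ≤ (k:ℝ)^2 := le_trans hcube3 hcube
      _ ≤ ((k:ℝ)+b)^2 := by nlinarith only [hnR_lb, hk0]
  have hX3lb : (0:ℝ) ≤ ((s:ℝ)+1)^3/((k:ℝ)+b)^2 := by positivity
  have hrpow : (k:ℝ)^(-(c/4)) = Real.exp (-(c*lk/4)) := by
    rw [Real.rpow_def_of_pos hk0]
    congr 1
    rw [← hlkdef]
    ring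
  have hexp_lb2 : Real.exp (-2:ℝ) * (k:ℝ)^(-(c/4)) ≤
      Real.exp (-(((k:ℝ)+b)*(((k:ℝ)-b)/((k:ℝ)+b))^2/2) - ((k:ℝ)+b)*(((k:ℝ)-b)/((k:ℝ)+b))^3) := by
    rw [hrpow, ← Real.exp_add, Real.exp_le_exp, hEXP1, hEXP2]
    linarith only [hEub, hX3ub]
  have hexp_ub2 : Real.exp (-(((k:ℝ)+b)*(((k:ℝ)-b)/((k:ℝ)+b))^2/2) + ((k:ℝ)+b)*(((k:ℝ)-b)/((k:ℝ)+b))^3)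
      ≤ Real.exp 1 * (k:ℝ)^(-(c/4)) := by
    rw [hrpow, ← Real.exp_add, Real.exp_le_exp, hEXP1, hEXP2]
    linarith only [hElb, hX3ub, hX3lb]
  -- sqrt factor bounds
  have hsqrt_ub : Real.sqrt (((k:ℝ)+b)/(2*k*b)) ≤ Real.sqrt 2 / Real.sqrt k := by
    have h1 : ((k:ℝ)+b)/(2*k*b) ≤ 2/k := by
      rw [div_le_div_iff₀ (by positivity) hk0]
      nlinarith only [hnR_ub, hbR2, hk0, hbR0]
    calc Real.sqrt (((k:ℝ)+b)/(2*k*b)) ≤ Real.sqrt (2/(k:ℝ)) := Real.sqrt_le_sqrt h1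
      _ = Real.sqrt 2 / Real.sqrt k := Real.sqrt_div (by norm_num) _
  have hsqrt_lb : 1/(Real.sqrt 2 * Real.sqrt k) ≤ Real.sqrt (((k:ℝ)+b)/(2*k*b)) := by
    have h1 : 1/(2*(k:ℝ)) ≤ ((k:ℝ)+b)/(2*k*b) := by
      rw [div_le_div_iff₀ (by positivity) (by positivity)]
      nlinarith only [hk0, hbR0]
    have h2 : Real.sqrt (1/(2*(k:ℝ))) = 1/(Real.sqrt 2 * Real.sqrt k) := by
      rw [Real.sqrt_div (by norm_num) _, Real.sqrt_one, Real.sqrt_mul (by norm_num) _]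
    rw [← h2]
    exact Real.sqrt_le_sqrt h1
  -- choose/pow rewrite to n
  have hch : ((k+b).choose k : ℝ) = (n.choose k : ℝ) := by rw [← hnab]
  have hpw : ((2:ℝ))^(k+b) = 2^n := by rw [← hnab]
  rw [hch, hpw] at hcb_lb hcb_ub
  set G : ℝ := (k:ℝ)^(-(c/4)) with hGdef
  have hG0 : 0 < G := Real.rpow_pos_of_pos hk0 _
  have tk_lb : (2*Real.sqrt π/Real.exp 2) * (1/(Real.sqrt 2*Real.sqrt k)) * (Real.exp (-2:ℝ) * G)
      ≤ (n.choose k : ℝ)/2^n := by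
    refine le_trans ?_ hcb_lb
    have h := mul_le_mul hsqrt_lb hexp_lb2 (by positivity) (Real.sqrt_nonneg _)
    calc (2*Real.sqrt π/Real.exp 2) * (1/(Real.sqrt 2*Real.sqrt k)) * (Real.exp (-2:ℝ) * G)
        = (2*Real.sqrt π/Real.exp 2) * ((1/(Real.sqrt 2*Real.sqrt k)) * (Real.exp (-2:ℝ) * G)) := by
          ring
      _ ≤ (2*Real.sqrt π/Real.exp 2) * (Real.sqrt (((k:ℝ)+b)/(2*k*b)) *
          Real.exp (-(((k:ℝ)+b)*(((k:ℝ)-b)/((k:ℝ)+b))^2/2) - ((k:ℝ)+b)*(((k:ℝ)-b)/((k:ℝ)+b))^3)) := by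
          apply mul_le_mul_of_nonneg_left h (by positivity)
      _ = 2*Real.sqrt π/Real.exp 2 * Real.sqrt (((k:ℝ)+b)/(2*k*b)) *
          Real.exp (-(((k:ℝ)+b)*(((k:ℝ)-b)/((k:ℝ)+b))^2/2) - ((k:ℝ)+b)*(((k:ℝ)-b)/((k:ℝ)+b))^3) := by
          ring
  have tk_ub : (n.choose k : ℝ)/2^n ≤
      (Real.exp 1/Real.sqrt 2/π) * (Real.sqrt 2/Real.sqrt k) * (Real.exp 1 * G) := by
    refine le_trans hcb_ub ?_
    have h := mul_le_mul hsqrt_ub hexp_ub2 (by positivity) (by positivity)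
    calc Real.exp 1/Real.sqrt 2/π * Real.sqrt (((k:ℝ)+b)/(2*k*b)) *
          Real.exp (-(((k:ℝ)+b)*(((k:ℝ)-b)/((k:ℝ)+b))^2/2) + ((k:ℝ)+b)*(((k:ℝ)-b)/((k:ℝ)+b))^3)
        = (Real.exp 1/Real.sqrt 2/π) * (Real.sqrt (((k:ℝ)+b)/(2*k*b)) *
          Real.exp (-(((k:ℝ)+b)*(((k:ℝ)-b)/((k:ℝ)+b))^2/2) + ((k:ℝ)+b)*(((k:ℝ)-b)/((k:ℝ)+b))^3)) := by
          ring
      _ ≤ (Real.exp 1/Real.sqrt 2/π) * ((Real.sqrt 2/Real.sqrt k) * (Real.exp 1 * G)) := by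
          apply mul_le_mul_of_nonneg_left h (by positivity)
      _ = (Real.exp 1/Real.sqrt 2/π) * (Real.sqrt 2/Real.sqrt k) * (Real.exp 1 * G) := by ring
  -- tail rewrite
  have h2n0 : (0:ℝ) < (2:ℝ)^n := by positivity
  have hkn : k ≤ n := by omega
  have hT : 1 - (∑ m ∈ Finset.range k, ((n).choose m : ℝ))/2^n
      = (∑ m ∈ Finset.Ico k (n+1), (n.choose m : ℝ))/2^n := by
    have hsum : (∑ m ∈ Finset.range (n+1), (n.choose m : ℝ)) = 2^n := by
      exact_mod_cast congrArg (Nat.cast (R:=ℝ)) (Nat.sum_range_choose n)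
    have hsplit := Finset.sum_range_add_sum_Ico (fun m => (n.choose m : ℝ)) (show k ≤ n+1 by omega)
    field_simp
    linarith only [hsum, hsplit]
  have hq_pos : (0:ℝ) < q := lt_of_lt_of_le (by norm_num) hq2
  have hkq : (k:ℝ)/q = Real.sqrt k/(Real.sqrt c*Real.sqrt lk) := by
    have hclk_split : w = Real.sqrt c * Real.sqrt lk := by
      rw [hwdef]; exact Real.sqrt_mul hc.le lk
    rw [hw, hclk_split, div_eq_div_iff (by positivity) (by positivity)]
    linear_combination (-(Real.sqrt c*Real.sqrt lk))*hsk
  rw [hT]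
  constructor
  · -- LOWER BOUND
    have h4s0 : 0 < 4*s := by omega
    have hL1' : 1 ≤ k/(4*s) := (Nat.one_le_div_iff h4s0).mpr (by omega)
    have hLmul' : (k/(4*s))*(4*s) ≤ k := Nat.div_mul_le_self k (4*s)
    have h8L' : 8*(k/(4*s)) ≤ k := by
      calc 8*(k/(4*s)) = (k/(4*s))*8 := by ring
        _ ≤ (k/(4*s))*(4*s) := Nat.mul_le_mul_left _ (by omega)
        _ ≤ k := hLmul'
    have hmodN : k < 4*s*(k/(4*s)) + 4*s := by
      have h1 := Nat.div_add_mod k (4*s)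
      have h2 := Nat.mod_lt k h4s0
      omega
    have h2N : k ≤ 8*s*(k/(4*s)) := by
      have h3 : 4*s ≤ 4*s*(k/(4*s)) := Nat.le_mul_of_pos_right _ (by omega)
      have h4 : 4*s*(k/(4*s)) + 4*s*(k/(4*s)) = 8*s*(k/(4*s)) := by ring
      omega
    set L := k/(4*s) with hLdef
    have hL1 : 1 ≤ L := hL1'
    have h8L : 8*L ≤ k := h8L'
    have hkLn : k + L ≤ n := by omega
    have hLR_ub : (L:ℝ) ≤ (k:ℝ)/(4*(s:ℝ)) := by
      have h := Nat.cast_div_le (α := ℝ) (m := k) (n := 4*s)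
      push_cast at h
      exact h
    have hsR2 : (2:ℝ) ≤ (s:ℝ) := by exact_mod_cast hs2
    have hLR_lb : (k:ℝ)/(8*(s:ℝ)) ≤ (L:ℝ) := by
      rw [div_le_iff₀ (by positivity)]
      calc (k:ℝ) ≤ ((8*s*L : ℕ):ℝ) := by exact_mod_cast h2N
        _ = (L:ℝ)*(8*(s:ℝ)) := by push_cast; ring
    set ρ : ℝ := ((n:ℝ)-k-L)/((k:ℝ)+L) with hρdef
    have hkL0 : (0:ℝ) < (k:ℝ)+L := by positivity
    have hnum_eq : (n:ℝ)-k-L = (b:ℝ) - L := by rw [hnc]; ring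
    have hbL : (L:ℝ) ≤ (b:ℝ) := by
      have : L ≤ b := by omega
      exact_mod_cast this
    have hρ0' : 0 ≤ (n:ℝ)-k-L := by rw [hnum_eq]; linarith only [hbL]
    have hkbR : (b:ℝ) ≤ (k:ℝ) := by exact_mod_cast hbk
    have hρ1' : (n:ℝ)-k-L ≤ (k:ℝ)+L := by
      rw [hnum_eq]
      have h0L : (0:ℝ) ≤ L := Nat.cast_nonneg L
      linarith only [hkbR, h0L, hbL]
    have htail_lb := tail_lower n k L hL1 hkLn hρ0' hρ1'
    have hu_eq : 1 - ρ = ((s:ℝ)+1+2*L)/((k:ℝ)+L) := by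
      rw [hρdef, hnum_eq, hbR]
      field_simp
      ring
    have hL0R : (0:ℝ) ≤ (L:ℝ) := Nat.cast_nonneg L
    have huL : (L:ℝ)*(1-ρ) ≤ 3/4 := by
      rw [hu_eq]
      have h1 : (L:ℝ)*(((s:ℝ)+1+2*L)/((k:ℝ)+L)) ≤ (L:ℝ)*(((s:ℝ)+1+2*L)/(k:ℝ)) := by
        apply mul_le_mul_of_nonneg_left _ hL0R
        apply div_le_div_of_nonneg_left (by positivity) hk0
        linarith only [hL0R]
      have h2 : (L:ℝ)*((s:ℝ)+1) ≤ (k:ℝ)/2 := by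
        calc (L:ℝ)*((s:ℝ)+1) ≤ ((k:ℝ)/(4*(s:ℝ)))*((s:ℝ)+1) :=
              mul_le_mul_of_nonneg_right hLR_ub (by positivity)
          _ ≤ (k:ℝ)/2 := by
              rw [div_mul_eq_mul_div, div_le_div_iff₀ (by positivity) (by norm_num)]
              nlinarith only [mul_nonneg hk0.le (show (0:ℝ) ≤ (s:ℝ)-1 by linarith only [hsR2])]
      have h3 : 2*(L:ℝ)^2 ≤ (k:ℝ)/4 := by
        have hL2 : (L:ℝ)^2 ≤ ((k:ℝ)/(4*(s:ℝ)))^2 := pow_le_pow_left₀ hL0R hLR_ub 2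
        have hsq2' : q^2 ≤ (s:ℝ)^2 := pow_le_pow_left₀ hq0 hsq 2
        have hprod : (0:ℝ) ≤ (2*c*lk - 1)*k := mul_nonneg (by linarith only [hc2]) hk0.le
        have hs2q : (k:ℝ) ≤ 2*(s:ℝ)^2 := by nlinarith only [hqsq, hsq2', hprod]
        have he : 2*((k:ℝ)/(4*(s:ℝ)))^2 = (k:ℝ)^2/(8*(s:ℝ)^2) := by
          field_simp; ring
        calc 2*(L:ℝ)^2 ≤ 2*((k:ℝ)/(4*(s:ℝ)))^2 := by linarith
          _ = (k:ℝ)^2/(8*(s:ℝ)^2) := he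
          _ ≤ (k:ℝ)/4 := by
              rw [div_le_div_iff₀ (by positivity) (by norm_num)]
              nlinarith only [mul_le_mul_of_nonneg_left hs2q hk0.le]
      have h4 : (L:ℝ)*(((s:ℝ)+1+2*L)/(k:ℝ)) = ((L:ℝ)*((s:ℝ)+1) + 2*(L:ℝ)^2)/(k:ℝ) := by
        field_simp
      have h5 : ((L:ℝ)*((s:ℝ)+1) + 2*(L:ℝ)^2)/(k:ℝ) ≤ ((k:ℝ)/2 + (k:ℝ)/4)/(k:ℝ) :=
        (div_le_div_iff_of_pos_right hk0).mpr (by linarith)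
      have h6 : ((k:ℝ)/2 + (k:ℝ)/4)/(k:ℝ) = 3/4 := by
        field_simp; ring
      linarith only [h1, h4, h5, h6]
    have hρnn : (0:ℝ) ≤ ρ := div_nonneg hρ0' hkL0.le
    have hbern : 1 - (L:ℝ)*(1-ρ) ≤ ρ^L := by
      have h := one_add_mul_le_pow (a := -(1-ρ)) (by linarith only [hρnn] : (-2:ℝ) ≤ -(1-ρ)) L
      have he : 1 + -(1-ρ) = ρ := by ring
      rw [he] at h
      have he2 : 1 + (L:ℝ)*(-(1-ρ)) = 1 - (L:ℝ)*(1-ρ) := by ring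
      rw [he2] at h
      exact h
    have hρL : (1:ℝ)/4 ≤ ρ^L := by linarith only [hbern, huL]
    have hL16 : Real.sqrt k/(16*(Real.sqrt c*Real.sqrt lk)) ≤ (L:ℝ) := by
      have h1 : (k:ℝ)/(16*q) ≤ (k:ℝ)/(8*(s:ℝ)) := by
        apply div_le_div_of_nonneg_left hk0.le (by positivity)
        linarith only [hs1q, hq2]
      have h2 : Real.sqrt k/(16*(Real.sqrt c*Real.sqrt lk)) = (k:ℝ)/(16*q) := by
        rw [show (k:ℝ)/(16*q) = ((k:ℝ)/q)/16 from by rw [div_div]; ring_nf, hkq, div_div]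
        ring_nf
      rw [h2]
      linarith only [h1, hLR_lb]
    have hLρ : Real.sqrt k/(16*(Real.sqrt c*Real.sqrt lk)) * (1/4) ≤ (L:ℝ)*ρ^L :=
      mul_le_mul hL16 hρL (by norm_num) hL0R
    have step1 : ((n.choose k:ℝ)/2^n) * ((L:ℝ)*ρ^L) ≤
        (∑ m ∈ Finset.Ico k (n+1), (n.choose m : ℝ))/2^n := by
      rw [div_mul_eq_mul_div]
      exact (div_le_div_iff_of_pos_right h2n0).mpr htail_lb
    have step2 : (2*Real.sqrt π/Real.exp 2 * Real.exp (-2:ℝ) / (64 * Real.sqrt 2 * Real.sqrt c))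
        * G / Real.sqrt lk ≤ ((n.choose k:ℝ)/2^n) * ((L:ℝ)*ρ^L) := by
      have hmul := mul_le_mul tk_lb hLρ (by positivity) (by positivity)
      refine le_trans (le_of_eq ?_) hmul
      field_simp
      ring
    linarith only [step1, step2]
  · -- UPPER BOUND
    have htail_ub := tail_upper n k hkn (by rw [hnc]; linarith only [hbR, hq2, hsq])
    have hfrac_eq : ((k:ℝ)+1) - ((n:ℝ)-k) = (s:ℝ)+2 := by rw [hnc, hbR]; ring
    rw [hfrac_eq] at htail_ub
    have hfrac_ub : ((k:ℝ)+1)/((s:ℝ)+2) ≤ 2*Real.sqrt k/(Real.sqrt c*Real.sqrt lk) := by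
      have h1 : ((k:ℝ)+1)/((s:ℝ)+2) ≤ (2*(k:ℝ))/q :=
        div_le_div₀ (by positivity) (by linarith only [hkR32]) hq_pos (by linarith only [hsq])
      have h2 : (2*(k:ℝ))/q = 2*Real.sqrt k/(Real.sqrt c*Real.sqrt lk) := by
        rw [mul_div_assoc, hkq, mul_div_assoc]
      linarith only [h1, h2]
    have step1 : (∑ m ∈ Finset.Ico k (n+1), (n.choose m : ℝ))/2^n ≤
        ((n.choose k:ℝ)/2^n) * (((k:ℝ)+1)/((s:ℝ)+2)) := by
      rw [div_mul_eq_mul_div]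
      exact (div_le_div_iff_of_pos_right h2n0).mpr htail_ub
    have step2 : ((n.choose k:ℝ)/2^n) * (((k:ℝ)+1)/((s:ℝ)+2)) ≤
        ((Real.exp 1/Real.sqrt 2/π) * (Real.sqrt 2/Real.sqrt k) * (Real.exp 1 * G)) *
          (2*Real.sqrt k/(Real.sqrt c*Real.sqrt lk)) :=
      mul_le_mul tk_ub hfrac_ub (by positivity) (by positivity)
    have step3 : ((Real.exp 1/Real.sqrt 2/π) * (Real.sqrt 2/Real.sqrt k) * (Real.exp 1 * G)) *
          (2*Real.sqrt k/(Real.sqrt c*Real.sqrt lk))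
        = (2 * Real.sqrt 2 * Real.exp 1 * (Real.exp 1 / Real.sqrt 2 / π) / Real.sqrt c)
            * G / Real.sqrt lk := by
      field_simp
    linarith only [step1, step2, step3]



/-- Moderate deviations for the binomial: with `r = k − ⌈√(c·k·log k)⌉` and
`p_k = Pr(Binomial(r+k−1, 1/2) ≤ k−1) = 2^{−(r+k−1)}·Σ_{m=0}^{k−1} C(r+k−1, m)`,
one has `1 − p_k = Θ(k^{−c/4}/√(log k))` as `k → ∞`. -/
theorem binomial_tail_theta (c : ℝ) (hc : 0 < c) :
    ∃ (A B : ℝ) (k₀ : ℕ), 0 < A ∧ A ≤ B ∧ ∀ k : ℕ, k₀ ≤ k →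
      let r : ℕ := k - ⌈Real.sqrt (c * k * Real.log k)⌉₊
      let p : ℝ := (∑ m ∈ Finset.range k, (Nat.choose (r + k - 1) m : ℝ)) / 2 ^ (r + k - 1)
      A * (k : ℝ) ^ (-(c / 4)) / Real.sqrt (Real.log k) ≤ 1 - p ∧
        1 - p ≤ B * (k : ℝ) ^ (-(c / 4)) / Real.sqrt (Real.log k) := by
  set A0 : ℝ := 2*Real.sqrt π/Real.exp 2 * Real.exp (-2:ℝ) / (64 * Real.sqrt 2 * Real.sqrt c)
    with hA0def
  set B0 : ℝ := 2 * Real.sqrt 2 * Real.exp 1 * (Real.exp 1 / Real.sqrt 2 / π) / Real.sqrt c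
    with hB0def
  have hsqrtpi : (0:ℝ) < Real.sqrt π := Real.sqrt_pos.mpr Real.pi_pos
  have hsc : (0:ℝ) < Real.sqrt c := Real.sqrt_pos.mpr hc
  have hA0 : 0 < A0 := by
    rw [hA0def]
    positivity
  have hB0 : 0 < B0 := by
    rw [hB0def]
    have := Real.pi_pos
    positivity
  obtain ⟨k₀, hk₀⟩ := Filter.eventually_atTop.mp (ev_conditions c hc)
  refine ⟨min A0 B0, max A0 B0, k₀, lt_min hA0 hB0,
    (min_le_left _ _).trans (le_max_left _ _), ?_⟩
  intro k hk
  obtain ⟨h1, h2, h3, h4, h5, h6⟩ := hk₀ k hk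
  have hme := main_estimate c hc k h1 h2 h3 h4 h5 h6
  have hlow : (min A0 B0) * (k:ℝ)^(-(c/4)) / Real.sqrt (Real.log k) ≤
      A0 * (k:ℝ)^(-(c/4)) / Real.sqrt (Real.log k) := by
    gcongr
    exact min_le_left _ _
  have hhigh : B0 * (k:ℝ)^(-(c/4)) / Real.sqrt (Real.log k) ≤
      (max A0 B0) * (k:ℝ)^(-(c/4)) / Real.sqrt (Real.log k) := by
    gcongr
    exact le_max_right _ _
  exact ⟨le_trans hlow hme.1, le_trans hme.2 hhigh⟩
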